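/- arXiv:1511.03983 — 2 statements merged into one kernel-verified Lean document; each statement's English description precedes it below -/
import Mathlib

section
/- Suppose around a degree-7 vertex w the seven incident faces are cyclically ordered and each 3-face containing a 4-vertex (a 'costly' face) occupies one cyclic position. If two 3-faces sharing an edge at w cannot both contain a 4⁻-vertex adjacent along that edge, then w is incident to at most four costly 3-faces, and if it is incident to exactly four, some incident face is not a 3-face. -/
set_option maxRecDepth 4000

lemma aux_costly (a b c d e p q : Fin 3)
    (key : ∀ i : Fin 7, ![a,b,c,d,e,p,q] i = 0 →
      ![a,b,c,d,e,p,q] (i - 1) = 2 ∨ ![a,b,c,d,e,p,q] (i + 1) = 2) :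
    (Finset.univ.filter (fun i : Fin 7 => ![a,b,c,d,e,p,q] i = 0)).card ≤ 4 ∧
    ((Finset.univ.filter (fun i : Fin 7 => ![a,b,c,d,e,p,q] i = 0)).card = 4 →
      ∃ i : Fin 7, ![a,b,c,d,e,p,q] i = 2) := by
  revert key; revert a b c d e p q; decide

/-- Faces around a degree-7 vertex `w` in cyclic positions `ZMod 7`,
classified by `f : ZMod 7 → Fin 3` (`0` = costly 3-face, `1` = other 3-face,
`2` = 4⁺-face); `g j = true` means the `j`-th neighbor of `w` is a 4-vertex.
Face `i` lies between neighbors `i` and `i+1`. If every costly 3-face contains a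
4-vertex among its two neighbors of `w`, and every 4-vertex neighbor lies on at
most one incident 3-face of `w`, then `w` is incident to at most four costly
3-faces, and if exactly four then some incident face is a 4⁺-face. -/
theorem at_most_four_costly_faces
    (f : ZMod 7 → Fin 3) (g : ZMod 7 → Bool)
    (hcostly : ∀ i : ZMod 7, f i = 0 → g i = true ∨ g (i + 1) = true)
    (h4vtx : ∀ j : ZMod 7, g j = true → ¬ (f (j - 1) ≠ 2 ∧ f j ≠ 2)) :
    (Finset.univ.filter (fun i : ZMod 7 => f i = 0)).card ≤ 4 ∧
    ((Finset.univ.filter (fun i : ZMod 7 => f i = 0)).card = 4 →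
      ∃ i : ZMod 7, f i = 2) := by
  have key : ∀ i : ZMod 7, f i = 0 → f (i - 1) = 2 ∨ f (i + 1) = 2 := by
    intro i hi
    rcases hcostly i hi with h | h
    · left
      have := h4vtx i h
      push_neg at this
      have h0 : f i ≠ 2 := by rw [hi]; decide
      by_contra hne
      exact h0 (this hne)
    · right
      have := h4vtx (i + 1) h
      push_neg at this
      simp only [add_sub_cancel_right] at this
      have h0 : f i ≠ 2 := by rw [hi]; decide
      exact this h0
  have hf : f = ![f 0, f 1, f 2, f 3, f 4, f 5, f 6] := by
    funext i; fin_cases i <;> rfl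
  rw [hf] at key ⊢
  exact aux_costly _ _ _ _ _ _ _ (fun i hi => key i hi)
end

section
/- For any n ≥ 3, a subset S of ZMod n containing no three cyclically consecutive elements has cardinality at most ⌊2n/3⌋. -/
/-- A subset of `ZMod n` (`n ≥ 3`) with no three cyclically
consecutive elements has cardinality at most `⌊2n/3⌋`. -/
theorem no_three_consecutive_card_bound (n : ℕ) [NeZero n] (hn : 3 ≤ n)
    (S : Finset (ZMod n))
    (h : ∀ i : ZMod n, ¬ (i ∈ S ∧ i + 1 ∈ S ∧ i + 2 ∈ S)) :
    S.card ≤ 2 * n / 3 := by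
  set g : ZMod n → ℕ := fun i =>
    (if i ∈ S then 1 else 0) + (if i + 1 ∈ S then 1 else 0) + (if i + 2 ∈ S then 1 else 0)
    with hg
  have hg2 : ∀ i : ZMod n, g i ≤ 2 := by
    intro i
    have := h i
    simp only [hg]
    by_cases h1 : i ∈ S <;> by_cases h2 : i + 1 ∈ S <;> by_cases h3 : i + 2 ∈ S <;>
      simp_all
  have hshift : ∀ c : ZMod n,
      (∑ i : ZMod n, if i + c ∈ S then 1 else 0) = S.card := by
    intro c
    rw [Fintype.sum_equiv (Equiv.addRight c) (fun i => if i + c ∈ S then 1 else 0)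
      (fun j => if j ∈ S then 1 else 0) (fun i => rfl)]
    simp [Finset.sum_ite_mem]
  have hsum : ∑ i : ZMod n, g i = 3 * S.card := by
    simp only [hg, Finset.sum_add_distrib]
    have h0 : (∑ i : ZMod n, if i ∈ S then 1 else 0) = S.card := by
      have := hshift 0; simp only [add_zero] at this; exact this
    rw [h0, hshift 1, hshift 2]
    ring
  have hle : ∑ i : ZMod n, g i ≤ 2 * n := by
    calc ∑ i : ZMod n, g i ≤ ∑ _i : ZMod n, 2 := Finset.sum_le_sum (fun i _ => hg2 i)
    _ = 2 * n := by simp [ZMod.card, mul_comm]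
  omega
end
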